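/- Let F be a field and let G be a k × n matrix over F whose rows span the linear code C ⊆ F^n and which has rank k. Then det(G Gᵀ) ≠ 0 if and only if C is an LCD code, i.e., C ∩ C^⊥ = {0}. -/

import Mathlib

/-- The Euclidean dual of a code `C ⊆ R^n`:
`C^⊥ = {x : x · c = 0 for all c ∈ C}` where `x · y = ∑ i, x i * y i`. -/
def dualCode {R : Type*} [CommRing R] {n : ℕ} (C : Submodule R (Fin n → R)) :
    Submodule R (Fin n → R) where
  carrier := {x | ∀ c ∈ C, ∑ i, x i * c i = 0}
  zero_mem' := by intro c hc; simp
  add_mem' := by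
    intro a b ha hb c hc
    have h1 := ha c hc
    have h2 := hb c hc
    simp only [Pi.add_apply, add_mul, Finset.sum_add_distrib, h1, h2, add_zero]
  smul_mem' := by
    intro r x hx c hc
    have h1 := hx c hc
    simp only [Pi.smul_apply, smul_eq_mul, mul_assoc, ← Finset.mul_sum, h1, mul_zero]

/-- A code is LCD (linear complementary dual) if `C ∩ C^⊥ = {0}`. -/
def IsLCD {R : Type*} [CommRing R] {n : ℕ} (C : Submodule R (Fin n → R)) : Prop :=
  C ⊓ dualCode C = ⊥

/-- For a `k × n` matrix `G` over a field `F` of rank `k`, `det (G * Gᵀ) ≠ 0` iff the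
code spanned by the rows of `G` is LCD. -/
theorem det_mul_transpose_ne_zero_iff_lcd {F : Type*} [Field F] {k n : ℕ}
    (G : Matrix (Fin k) (Fin n) F) (hrank : G.rank = k) :
    (G * G.transpose).det ≠ 0 ↔ IsLCD (Submodule.span F (Set.range fun i => G i)) := by

  classical
  set C := Submodule.span F (Set.range fun i => G i) with hC
  have hli : LinearIndependent F (fun i => G i) := by
    rw [linearIndependent_iff_card_eq_finrank_span]
    have := G.rank_eq_finrank_span_row
    rw [hrank] at this
    rw [Fintype.card_fin]; exact this
  -- key computation
  have hkey : ∀ v : Fin k → F, G.mulVec (Matrix.vecMul v G) = (G * G.transpose).mulVec v := by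
    intro v
    rw [← Matrix.mulVec_transpose, Matrix.mulVec_mulVec]
  have hrow : ∀ (x : Fin n → F) (i : Fin k), (∑ j, x j * G i j) = G.mulVec x i := by
    intro x i
    simp [Matrix.mulVec, dotProduct, mul_comm]
  constructor
  · intro hdet
    rw [IsLCD, Submodule.eq_bot_iff]
    rintro x ⟨hxC, hxD⟩
    obtain ⟨v, hv⟩ : ∃ v, Matrix.vecMul v G = x := by
      have : x ∈ LinearMap.range G.vecMulLinear := by
        rw [range_vecMulLinear]; exact hxC
      obtain ⟨v, hv⟩ := this
      exact ⟨v, by simpa [Matrix.vecMulLinear_apply] using hv⟩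
    have hGx : G.mulVec x = 0 := by
      funext i
      rw [← hrow]
      exact hxD (G i) (Submodule.subset_span ⟨i, rfl⟩)
    have hv0 : (G * G.transpose).mulVec v = 0 := by
      rw [← hkey, hv, hGx]
    have hinj : Function.Injective (G * G.transpose).mulVec :=
      Matrix.mulVec_injective_iff_isUnit.mpr
        ((Matrix.isUnit_iff_isUnit_det _).mpr (Ne.isUnit hdet))
    have : v = 0 := hinj (by simp [hv0])
    rw [← hv, this, Matrix.zero_vecMul]
  · intro hlcd
    by_contra hdet
    obtain ⟨v, hv0, hv⟩ := (Matrix.exists_mulVec_eq_zero_iff).mpr hdet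
    set x := Matrix.vecMul v G with hx
    have hxne : x ≠ 0 := by
      intro h
      apply hv0
      have hinj : Function.Injective (Matrix.vecMul · G) :=
        Matrix.vecMul_injective_iff.mpr hli
      exact hinj (by simp [← hx, h, Matrix.zero_vecMul])
    have hxC : x ∈ C := by
      rw [hC]; show x ∈ Submodule.span F (Set.range G.row); rw [← range_vecMulLinear]
      exact ⟨v, rfl⟩
    have hGx : G.mulVec x = 0 := by rw [hx, hkey, hv]
    have hxD : x ∈ dualCode C := by
      intro c hc
      induction hc using Submodule.span_induction with
      | mem c hc =>
        obtain ⟨i, rfl⟩ := hc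
        rw [hrow, hGx]; rfl
      | zero => simp
      | add a b _ _ ha hb => simp [mul_add, Finset.sum_add_distrib, ha, hb]
      | smul r a _ ha =>
        simp only [Pi.smul_apply, smul_eq_mul]
        calc ∑ i, x i * (r * a i) = r * ∑ i, x i * a i := by
              rw [Finset.mul_sum]; exact Finset.sum_congr rfl fun i _ => by ring
          _ = 0 := by rw [ha, mul_zero]
    have : x = 0 := by
      rw [IsLCD, Submodule.eq_bot_iff] at hlcd
      exact hlcd x ⟨hxC, hxD⟩
    exact hxne this
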